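/- Assume fixed recourse, i.e., B(ξ) = B for all ξ ∈ U (equivalently B^i = 0 for all i ∈ [n_ξ]). Then for every x ∈ X that is feasible for 2RO-C, there exist finitely many convex recourse-stable regions D_1,…,D_R ⊆ U (for x) with cl(D_1) ∪ … ∪ cl(D_R) = U and R ≤ Σ_{i=0}^{min{m,n_ξ}} C(η, i); in particular R ∈ O(η^{min{m,n_ξ}}). -/

import Mathlib

section

variable {nx ny nξ m : ℕ}

/-- Feasibility of `(x,y)` under scenario `ξ` for the fixed-recourse constraint system
`A(ξ)x + By ≥ h(ξ)` with `h(ξ) = h + Hξ`, `A(ξ) = A + Σᵢ Aⁱξᵢ`. -/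
def FeasS (hv : Fin m → ℤ) (H : Matrix (Fin m) (Fin nξ) ℤ)
    (A0 : Matrix (Fin m) (Fin nx) ℤ) (Ai : Fin nξ → Matrix (Fin m) (Fin nx) ℤ)
    (B0 : Matrix (Fin m) (Fin ny) ℤ)
    (x : Fin nx → ℝ) (y : Fin ny → ℝ) (ξ : Fin nξ → ℝ) : Prop :=
  ∀ l, (hv l : ℝ) + ∑ i, (H l i : ℝ) * ξ i ≤
    (∑ j, ((A0 l j : ℝ) + ∑ i, ξ i * (Ai i l j : ℝ)) * x j) +
    ∑ j, (B0 l j : ℝ) * y j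

/-- `x` is feasible for the two-stage robust problem. -/
def Feasible2RO (hv : Fin m → ℤ) (H : Matrix (Fin m) (Fin nξ) ℤ)
    (A0 : Matrix (Fin m) (Fin nx) ℤ) (Ai : Fin nξ → Matrix (Fin m) (Fin nx) ℤ)
    (B0 : Matrix (Fin m) (Fin ny) ℤ)
    (Yx : (Fin nx → ℝ) → Set (Fin ny → ℝ)) (U : Set (Fin nξ → ℝ))
    (x : Fin nx → ℝ) : Prop :=
  ∀ ξ ∈ U, ∃ y ∈ Yx x, FeasS hv H A0 Ai B0 x y ξ

/-- A convex set `D` is recourse-stable for `x`. -/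
def RecourseStableS (hv : Fin m → ℤ) (H : Matrix (Fin m) (Fin nξ) ℤ)
    (A0 : Matrix (Fin m) (Fin nx) ℤ) (Ai : Fin nξ → Matrix (Fin m) (Fin nx) ℤ)
    (B0 : Matrix (Fin m) (Fin ny) ℤ)
    (Yx : (Fin nx → ℝ) → Set (Fin ny → ℝ))
    (x : Fin nx → ℝ) (D : Set (Fin nξ → ℝ)) : Prop :=
  ∀ y ∈ Yx x, (∀ ξ ∈ D, FeasS hv H A0 Ai B0 x y ξ) ∨
    (∀ ξ ∈ D, ¬ FeasS hv H A0 Ai B0 x y ξ)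

/-- Coefficient vector `a_l(x,y)` of `ξ` in row `l` (fixed recourse: no `Bⁱ` term). -/
def rowCoef (H : Matrix (Fin m) (Fin nξ) ℤ) (Ai : Fin nξ → Matrix (Fin m) (Fin nx) ℤ)
    (x : Fin nx → ℝ) (l : Fin m) : Fin nξ → ℝ :=
  fun i => (∑ j, (Ai i l j : ℝ) * x j) - (H l i : ℝ)

/-- Right-hand side `h_l(x,y)` of row `l`. -/
def rowRhs (hv : Fin m → ℤ) (A0 : Matrix (Fin m) (Fin nx) ℤ)
    (B0 : Matrix (Fin m) (Fin ny) ℤ)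
    (x : Fin nx → ℝ) (y : Fin ny → ℝ) (l : Fin m) : ℝ :=
  (hv l : ℝ) - (∑ j, (A0 l j : ℝ) * x j) - ∑ j, (B0 l j : ℝ) * y j

/-- The set `H(x)` of hyperplanes with nonzero normal induced by the constraint rows over all
`y ∈ Y(x)`, that intersect `U`. -/
def HypSet (hv : Fin m → ℤ) (H : Matrix (Fin m) (Fin nξ) ℤ)
    (A0 : Matrix (Fin m) (Fin nx) ℤ) (Ai : Fin nξ → Matrix (Fin m) (Fin nx) ℤ)
    (B0 : Matrix (Fin m) (Fin ny) ℤ)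
    (Yx : (Fin nx → ℝ) → Set (Fin ny → ℝ)) (U : Set (Fin nξ → ℝ))
    (x : Fin nx → ℝ) : Set (Set (Fin nξ → ℝ)) :=
  {P | ∃ y ∈ Yx x, ∃ l : Fin m, rowCoef H Ai x l ≠ 0 ∧
    P = {ξ | ∑ i, rowCoef H Ai x l i * ξ i = rowRhs hv A0 B0 x y l} ∧
    (P ∩ U).Nonempty}

end

open Finset Module Submodule

section AuxLemmas

/-- The linear functional `ξ ↦ ∑ i, a i * ξ i`. -/
noncomputable def linMap {d : ℕ} (a : Fin d → ℝ) : (Fin d → ℝ) →ₗ[ℝ] ℝ where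
  toFun ξ := ∑ i, a i * ξ i
  map_add' u v := by simp [mul_add, Finset.sum_add_distrib]
  map_smul' r v := by
    simp only [Pi.smul_apply, smul_eq_mul, RingHom.id_apply, Finset.mul_sum]
    exact Finset.sum_congr rfl fun i _ => by ring

@[simp] lemma linMap_apply {d : ℕ} (a ξ : Fin d → ℝ) : linMap a ξ = ∑ i, a i * ξ i := rfl

/-- `fsum n r = ∑_{i=0}^{r} C(n,i)`. -/
def fsum (n r : ℕ) : ℕ := ∑ i ∈ Finset.range (r+1), n.choose i

lemma fsum_mono_n {n n' : ℕ} (h : n ≤ n') (r : ℕ) : fsum n r ≤ fsum n' r :=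
  Finset.sum_le_sum fun i _ => Nat.choose_le_choose i h

lemma fsum_mono_r (n : ℕ) {r r' : ℕ} (h : r ≤ r') : fsum n r ≤ fsum n r' :=
  Finset.sum_le_sum_of_subset (by
    intro i hi; simp only [Finset.mem_range] at *; omega)

lemma fsum_succ (n r : ℕ) : fsum n (r+1) = fsum n r + n.choose (r+1) := by
  simp [fsum, Finset.sum_range_succ]

lemma fsum_pascal (n r : ℕ) : fsum n (r+1) + fsum n r = fsum (n+1) (r+1) := by
  induction r with
  | zero => simp [fsum, Finset.sum_range_succ]; omega
  | succ r ih =>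
      show fsum n (r+2) + fsum n (r+1) = fsum (n+1) (r+2)
      have h1 : fsum n (r+2) = fsum n (r+1) + n.choose (r+2) := fsum_succ n (r+1)
      have h2 := fsum_succ n r
      have h3 : fsum (n+1) (r+2) = fsum (n+1) (r+1) + (n+1).choose (r+2) := fsum_succ (n+1) (r+1)
      have h4 : (n+1).choose (r+2) = n.choose (r+1) + n.choose (r+2) := by
        rw [Nat.choose_succ_succ]
      omega


lemma range_add_one_le_aux {V V₂ : Type*} [AddCommGroup V] [Module ℝ V] [FiniteDimensional ℝ V]
    [AddCommGroup V₂] [Module ℝ V₂] (f : V →ₗ[ℝ] V₂) (z : V) (hz : f z = 0) (hne : z ≠ 0) :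
    finrank ℝ (LinearMap.range f) + 1 ≤ finrank ℝ V := by
  have h1 := LinearMap.finrank_range_add_finrank_ker f
  have h2 : 1 ≤ finrank ℝ (LinearMap.ker f) := Submodule.one_le_finrank_iff.mpr
    (fun h => hne ((Submodule.eq_bot_iff _).1 h z (LinearMap.mem_ker.mpr hz)))
  omega

lemma range_add_one_le_aux' {M V₂ : Type*} [AddCommGroup M] [Module ℝ M] (S : Submodule ℝ M)
    [FiniteDimensional ℝ S] [AddCommGroup V₂] [Module ℝ V₂] (f : S →ₗ[ℝ] V₂) (z : S)
    (hz : f z = 0) (hne : z ≠ 0) :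
    finrank ℝ (LinearMap.range f) + 1 ≤ finrank ℝ S :=
  range_add_one_le_aux (V := S) f z hz hne

lemma rank_drop {E : Type*} [AddCommGroup E] [Module ℝ E] {n : ℕ}
    (W : Submodule ℝ E) (φ : Fin (n+1) → E →ₗ[ℝ] ℝ)
    (hψ : (φ (Fin.last n)).domRestrict W ≠ 0) :
    finrank ℝ (span ℝ (Set.range fun k : Fin n =>
        (φ k.castSucc).domRestrict (W ⊓ LinearMap.ker (φ (Fin.last n))))) + 1
      ≤ finrank ℝ (span ℝ (Set.range fun k : Fin (n+1) => (φ k).domRestrict W)) := by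
  set ψ := φ (Fin.last n) with hψdef
  set W' : Submodule ℝ E := W ⊓ LinearMap.ker ψ with hW'
  have hle : W' ≤ W := inf_le_left
  set ι : W' →ₗ[ℝ] W := Submodule.inclusion hle with hι
  set ρ : (W →ₗ[ℝ] ℝ) →ₗ[ℝ] (W' →ₗ[ℝ] ℝ) := LinearMap.lcomp ℝ ℝ ι with hρ
  set S : Submodule ℝ (W →ₗ[ℝ] ℝ) :=
    span ℝ (Set.range fun k : Fin (n+1) => (φ k).domRestrict W) with hS
  haveI : FiniteDimensional ℝ S := FiniteDimensional.span_of_finite ℝ (Set.finite_range _)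
  set f : S →ₗ[ℝ] (W' →ₗ[ℝ] ℝ) := ρ ∘ₗ S.subtype with hf
  have hrange : ∀ k : Fin n, (φ k.castSucc).domRestrict W' ∈ LinearMap.range f := by
    intro k
    refine ⟨⟨(φ k.castSucc).domRestrict W, subset_span ⟨k.castSucc, rfl⟩⟩, ?_⟩
    ext x; rfl
  have hspan : span ℝ (Set.range fun k : Fin n => (φ k.castSucc).domRestrict W')
      ≤ LinearMap.range f := by
    rw [span_le]; rintro _ ⟨k, rfl⟩; exact hrange k
  have hkerel : (⟨ψ.domRestrict W, subset_span ⟨Fin.last n, rfl⟩⟩ : S) ∈ LinearMap.ker f := by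
    rw [LinearMap.mem_ker]
    ext x
    exact x.2.2
  have hkerne : (⟨ψ.domRestrict W, subset_span ⟨Fin.last n, rfl⟩⟩ : S) ≠ 0 := by
    intro h
    apply hψ
    have := congrArg Subtype.val h
    simpa using this
  have hker1 : finrank ℝ (LinearMap.range f) + 1 ≤ finrank ℝ S :=
    range_add_one_le_aux' S f _ (LinearMap.mem_ker.mp hkerel) hkerne
  have hmono : finrank ℝ (span ℝ (Set.range fun k : Fin n => (φ k.castSucc).domRestrict W'))
      ≤ finrank ℝ (LinearMap.range f) := Submodule.finrank_mono hspan
  omega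



section PB
variable {E : Type*} [AddCommGroup E] [Module ℝ E]

lemma cross_point (ψ : E →ₗ[ℝ] ℝ) (c : ℝ) {ξ₁ ξ₂ : E} (h1 : c < ψ ξ₁) (h2 : ψ ξ₂ < c) :
    ∃ t : ℝ, 0 < t ∧ t < 1 ∧ ψ (ξ₂ + t • (ξ₁ - ξ₂)) = c := by
  refine ⟨(c - ψ ξ₂) / (ψ ξ₁ - ψ ξ₂), div_pos (by linarith) (by linarith), ?_, ?_⟩
  · rw [div_lt_one (by linarith)]; linarith
  · have h : ψ ξ₁ - ψ ξ₂ ≠ 0 := by linarith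
    simp only [map_add, map_smul, map_sub, smul_eq_mul]
    field_simp
    ring

lemma comb_eq (ξ₁ ξ₂ : E) (t : ℝ) :
    ξ₂ + t • (ξ₁ - ξ₂) = (1 - t) • ξ₂ + t • ξ₁ := by
  rw [smul_sub, sub_smul, one_smul]; abel

lemma sign_keep_lt (φ : E →ₗ[ℝ] ℝ) (c : ℝ) {ξ₁ ξ₂ : E} {t : ℝ} (h1 : φ ξ₁ < c) (h2 : φ ξ₂ < c)
    (ht0 : 0 ≤ t) (ht1 : t ≤ 1) : φ (ξ₂ + t • (ξ₁ - ξ₂)) < c := by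
  rw [comb_eq]
  exact convex_halfSpace_lt (LinearMap.isLinear φ) c h2 h1 (by linarith) ht0 (by ring)

lemma sign_keep_gt (φ : E →ₗ[ℝ] ℝ) (c : ℝ) {ξ₁ ξ₂ : E} {t : ℝ} (h1 : c < φ ξ₁) (h2 : c < φ ξ₂)
    (ht0 : 0 ≤ t) (ht1 : t ≤ 1) : c < φ (ξ₂ + t • (ξ₁ - ξ₂)) := by
  rw [comb_eq]
  exact convex_halfSpace_gt (LinearMap.isLinear φ) c h2 h1 (by linarith) ht0 (by ring)


/-- The set of strict sign patterns realized on the affine subspace `p + W` by the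
hyperplanes `(φ k, c k)`. -/
def patSet {n : ℕ} (W : Submodule ℝ E) (p : E) (φ : Fin n → E →ₗ[ℝ] ℝ) (c : Fin n → ℝ) :
    Set (Fin n → Bool) :=
  {s | ∃ w ∈ W, ∀ k, φ k (p + w) ≠ c k ∧ (s k = true ↔ c k < φ k (p + w))}

lemma pattern_bound (n : ℕ) :
    ∀ (r : ℕ) (W : Submodule ℝ E) (p : E) (φ : Fin n → E →ₗ[ℝ] ℝ) (c : Fin n → ℝ),
    finrank ℝ (span ℝ (Set.range fun k => (φ k).domRestrict W)) ≤ r →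
    (patSet W p φ c).ncard ≤ fsum n r := by
  induction n with
  | zero =>
      intro r W p φ c _
      have h1 : (patSet W p φ c).ncard ≤ (Set.univ : Set (Fin 0 → Bool)).ncard :=
        Set.ncard_le_ncard (Set.subset_univ _) (Set.toFinite _)
      have h2 : (Set.univ : Set (Fin 0 → Bool)).ncard = 1 := by
        rw [Set.ncard_univ]; simp [Nat.card_eq_fintype_card]
      have h3 : 1 ≤ fsum 0 r := by
        have : (0:ℕ).choose 0 ≤ fsum 0 r :=
          Finset.single_le_sum (f := fun i => (0:ℕ).choose i) (fun i _ => Nat.zero_le _)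
            (by simp)
        simpa using this
      omega
  | succ n IH =>
      intro r W p φ c hr
      classical
      set ψ := φ (Fin.last n) with hψdef
      set cψ := c (Fin.last n) with hcψdef
      set Pall := patSet W p φ c with hPall
      set S : Submodule ℝ (W →ₗ[ℝ] ℝ) :=
        span ℝ (Set.range fun k : Fin (n+1) => (φ k).domRestrict W) with hS
      haveI : FiniteDimensional ℝ S := FiniteDimensional.span_of_finite ℝ (Set.finite_range _)
      -- the init patterns on the same affine subspace
      set Pinit := patSet W p (fun k : Fin n => φ k.castSucc) (fun k => c k.castSucc) with hPinit
      have hinitrank : finrank ℝ (span ℝ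
          (Set.range fun k : Fin n => (φ k.castSucc).domRestrict W)) ≤ r := by
        refine le_trans (Submodule.finrank_mono ?_) hr
        apply span_mono
        rintro _ ⟨k, rfl⟩; exact ⟨k.castSucc, rfl⟩
      have hPinitcard : Pinit.ncard ≤ fsum n r := IH r W p _ _ hinitrank
      -- init of a pattern is an init-pattern
      have hinitmem : ∀ s ∈ Pall, Fin.init s ∈ Pinit := by
        rintro s ⟨w, hw, hs⟩
        exact ⟨w, hw, fun k => hs k.castSucc⟩
      -- constant-last-sign case
      have key_const : (∀ s₁ ∈ Pall, ∀ s₂ ∈ Pall, s₁ (Fin.last n) = s₂ (Fin.last n)) →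
          Pall.ncard ≤ fsum (n+1) r := by
        intro hcon
        have hinj : Set.InjOn (fun s : Fin (n+1) → Bool => Fin.init s) Pall := by
          intro s₁ h₁ s₂ h₂ he
          funext k
          refine Fin.lastCases ?_ ?_ k
          · exact hcon s₁ h₁ s₂ h₂
          · intro i; exact congrFun he i
        calc Pall.ncard = (Fin.init '' Pall).ncard := (Set.ncard_image_of_injOn hinj).symm
          _ ≤ Pinit.ncard := Set.ncard_le_ncard (by rintro _ ⟨s, hs, rfl⟩; exact hinitmem s hs)
                (Set.toFinite _)
          _ ≤ fsum n r := hPinitcard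
          _ ≤ fsum (n+1) r := fsum_mono_n (Nat.le_succ n) r
      by_cases hcross : ∃ w₁ ∈ W, ∃ w₂ ∈ W, cψ < ψ (p + w₁) ∧ ψ (p + w₂) < cψ
      · -- crossing case
        obtain ⟨w₁, hw₁, w₂, hw₂, hgt, hlt⟩ := hcross
        obtain ⟨t₀, ht₀0, ht₀1, ht₀eq⟩ := cross_point ψ cψ hgt hlt
        have hstar : (p + w₂) + t₀ • ((p + w₁) - (p + w₂)) = p + (w₂ + t₀ • (w₁ - w₂)) := by
          module
        set wstar := w₂ + t₀ • (w₁ - w₂) with hwstar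
        have hwstarW : wstar ∈ W := W.add_mem hw₂ (W.smul_mem _ (W.sub_mem hw₁ hw₂))
        have hψstar : ψ (p + wstar) = cψ := by rw [← hstar]; exact ht₀eq
        set p' := p + wstar with hp'
        set W' : Submodule ℝ E := W ⊓ LinearMap.ker ψ with hW'
        -- ψ restricted to W is nonzero
        have hψW : ψ.domRestrict W ≠ 0 := by
          intro h0
          have e1 : ψ w₁ = 0 := LinearMap.congr_fun h0 ⟨w₁, hw₁⟩
          have e2 : ψ w₂ = 0 := LinearMap.congr_fun h0 ⟨w₂, hw₂⟩
          rw [map_add, e1] at hgt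
          rw [map_add, e2] at hlt
          linarith
        -- rank is at least one
        have hr1 : 1 ≤ r := by
          have hmem : ψ.domRestrict W ∈ S := subset_span ⟨Fin.last n, rfl⟩
          have : 0 < finrank ℝ S := by
            haveI : Nontrivial S := nontrivial_of_ne ⟨_, hmem⟩ 0
              (fun h => hψW (by simpa using congrArg Subtype.val h))
            exact Module.finrank_pos (M := S)
          omega
        obtain ⟨r'', rfl⟩ : ∃ r'', r = r'' + 1 := ⟨r - 1, by omega⟩
        -- the cross patterns
        set Pcross := patSet W' p' (fun k : Fin n => φ k.castSucc) (fun k => c k.castSucc)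
          with hPcross
        have hcrossrank : finrank ℝ (span ℝ
            (Set.range fun k : Fin n => (φ k.castSucc).domRestrict W')) ≤ r'' := by
          have hdrop := rank_drop W φ hψW
          rw [← hψdef] at hdrop
          rw [← hW'] at hdrop
          rw [← hS] at hdrop
          omega
        have hPcrosscard : Pcross.ncard ≤ fsum n r'' := IH r'' W' p' _ _ hcrossrank
        -- the injection
        set Hmap : (Fin (n+1) → Bool) → (Fin n → Bool) ⊕ (Fin n → Bool) := fun s =>
          if s (Fin.last n) = true ∨ Fin.snoc (Fin.init s) true ∉ Pall then Sum.inl (Fin.init s)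
          else Sum.inr (Fin.init s) with hHmap
        have hHinj : Set.InjOn Hmap Pall := by
          intro s₁ h₁ s₂ h₂ he
          have hinit : Fin.init s₁ = Fin.init s₂ := by
            by_cases c₁ : s₁ (Fin.last n) = true ∨ Fin.snoc (Fin.init s₁) true ∉ Pall <;>
            by_cases c₂ : s₂ (Fin.last n) = true ∨ Fin.snoc (Fin.init s₂) true ∉ Pall <;>
            simp only [hHmap, c₁, c₂, if_pos, if_neg, if_true, if_false, not_true, not_false_iff] at he <;>
            first
              | exact Sum.inl.inj he
              | exact Sum.inr.inj he
              | exact absurd he (by simp)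
          have hlast : s₁ (Fin.last n) = s₂ (Fin.last n) := by
            by_contra hne
            -- wlog s₁ last = true, s₂ last = false
            rcases Bool.eq_false_or_eq_true (s₁ (Fin.last n)) with hb₁ | hb₁ <;>
              rcases Bool.eq_false_or_eq_true (s₂ (Fin.last n)) with hb₂ | hb₂
            · exact hne (hb₁.trans hb₂.symm)
            · -- s₁ true, s₂ false
              have hs₂mem : Fin.snoc (Fin.init s₂) true ∈ Pall := by
                have : Fin.snoc (Fin.init s₂) true = s₁ := by
                  rw [← hinit, ← hb₁]; exact Fin.snoc_init_self s₁
                rw [this]; exact h₁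
              have e₂ : Hmap s₂ = Sum.inr (Fin.init s₂) := by
                simp only [hHmap]; rw [if_neg]; push_neg
                exact ⟨by simp [hb₂], by simpa using hs₂mem⟩
              have e₁ : Hmap s₁ = Sum.inl (Fin.init s₁) := by
                simp only [hHmap]; rw [if_pos]; left; exact hb₁
              rw [e₁, e₂] at he; exact absurd he (by simp)
            · -- s₁ false, s₂ true
              have hs₁mem : Fin.snoc (Fin.init s₁) true ∈ Pall := by
                have : Fin.snoc (Fin.init s₁) true = s₂ := by
                  rw [hinit, ← hb₂]; exact Fin.snoc_init_self s₂
                rw [this]; exact h₂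
              have e₁ : Hmap s₁ = Sum.inr (Fin.init s₁) := by
                simp only [hHmap]; rw [if_neg]; push_neg
                exact ⟨by simp [hb₁], by simpa using hs₁mem⟩
              have e₂ : Hmap s₂ = Sum.inl (Fin.init s₂) := by
                simp only [hHmap]; rw [if_pos]; left; exact hb₂
              rw [e₁, e₂] at he; exact absurd he (by simp)
            · exact hne (hb₁.trans hb₂.symm)
          funext k
          refine Fin.lastCases hlast (fun i => congrFun hinit i) k
        have hHimg : Hmap '' Pall ⊆ Sum.inl '' Pinit ∪ Sum.inr '' Pcross := by
          rintro _ ⟨s, hs, rfl⟩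
          by_cases hc : s (Fin.last n) = true ∨ Fin.snoc (Fin.init s) true ∉ Pall
          · left
            refine ⟨Fin.init s, hinitmem s hs, ?_⟩
            simp only [hHmap]; rw [if_pos hc]
          · right
            push_neg at hc
            obtain ⟨hfalse, hmem'⟩ := hc
            have hfalse' : s (Fin.last n) = false := by
              revert hfalse; cases s (Fin.last n) <;> simp
            refine ⟨Fin.init s, ?_, by simp only [hHmap]; rw [if_neg (by push_neg; exact ⟨hfalse, hmem'⟩)]⟩
            -- build the crossing witness
            obtain ⟨wf, hwf, hsf⟩ := hs
            obtain ⟨wt, hwt, hst⟩ := hmem'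
            have hflast : ψ (p + wf) < cψ := by
              have := hsf (Fin.last n)
              rcases lt_or_gt_of_ne this.1 with h | h
              · exact h
              · exact absurd (this.2.mpr h) hfalse
            have htlast : cψ < ψ (p + wt) := by
              have := hst (Fin.last n)
              have hlastval : Fin.snoc (Fin.init s) true (Fin.last n) = true := by
                simp
              exact this.2.mp hlastval
            obtain ⟨t', ht'0, ht'1, ht'eq⟩ := cross_point ψ cψ htlast hflast
            have hζ0 : (p + wf) + t' • ((p + wt) - (p + wf)) = p + (wf + t' • (wt - wf)) := by
              module
            set wζ := wf + t' • (wt - wf) with hwζ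
            have hζ : (p + wf) + t' • ((p + wt) - (p + wf)) = p + wζ := hζ0
            have hwζW : wζ ∈ W := W.add_mem hwf (W.smul_mem _ (W.sub_mem hwt hwf))
            set w' := wζ - wstar with hw'
            have hψwζ : ψ (p + wζ) = cψ := by rw [← hζ]; exact ht'eq
            have hψ0 : ψ w' = 0 := by
              have e2 : ψ p + ψ wζ = cψ := by rw [← map_add]; exact hψwζ
              have e3 : ψ p + ψ wstar = cψ := by rw [← map_add]; exact hψstar
              simp only [hw', map_sub]
              linarith
            have hw'W' : w' ∈ W' := by
              rw [hW', Submodule.mem_inf]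
              exact ⟨W.sub_mem hwζW hwstarW, LinearMap.mem_ker.mpr hψ0⟩
            refine ⟨w', hw'W', fun k => ?_⟩
            have hpw' : p' + w' = (p + wf) + t' • ((p + wt) - (p + wf)) := by
              rw [hζ, hp', hw']; abel
            have hkf := hsf k.castSucc
            have hkt := hst k.castSucc
            have hktval : Fin.snoc (Fin.init s) true k.castSucc = Fin.init s k := by
              simp [Fin.snoc_castSucc]
            have hsval : s k.castSucc = Fin.init s k := rfl
            show (φ k.castSucc) (p' + w') ≠ c k.castSucc ∧
              (Fin.init s k = true ↔ c k.castSucc < (φ k.castSucc) (p' + w'))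
            rcases Bool.eq_false_or_eq_true (Fin.init s k) with hb | hb
            · -- true case: both endpoints strictly above
              have h1 : c k.castSucc < φ k.castSucc (p + wf) := hkf.2.mp (hsval.trans hb)
              have h2 : c k.castSucc < φ k.castSucc (p + wt) := hkt.2.mp (hktval.trans hb)
              have h3 : c k.castSucc < φ k.castSucc (p' + w') := by
                rw [hpw']; exact sign_keep_gt _ _ h2 h1 ht'0.le ht'1.le
              exact ⟨(ne_of_lt h3).symm, ⟨fun _ => h3, fun _ => hb⟩⟩
            · -- false case: both endpoints strictly below
              have h1 : φ k.castSucc (p + wf) < c k.castSucc := by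
                have hnot : ¬ (c k.castSucc < φ k.castSucc (p + wf)) := fun hh => by
                  have := hkf.2.mpr hh
                  rw [hsval, hb] at this
                  exact absurd this (by simp)
                exact lt_of_le_of_ne (not_lt.mp hnot) hkf.1
              have h2 : φ k.castSucc (p + wt) < c k.castSucc := by
                have hnot : ¬ (c k.castSucc < φ k.castSucc (p + wt)) := fun hh => by
                  have := hkt.2.mpr hh
                  rw [hktval, hb] at this
                  exact absurd this (by simp)
                exact lt_of_le_of_ne (not_lt.mp hnot) hkt.1
              have h3 : φ k.castSucc (p' + w') < c k.castSucc := by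
                rw [hpw']; exact sign_keep_lt _ _ h2 h1 ht'0.le ht'1.le
              constructor
              · exact ne_of_lt h3
              · constructor
                · intro hh; rw [hb] at hh; exact absurd hh (by simp)
                · intro hh; exact absurd hh (not_lt.mpr h3.le)
        calc Pall.ncard = (Hmap '' Pall).ncard := (Set.ncard_image_of_injOn hHinj).symm
          _ ≤ (Sum.inl '' Pinit ∪ Sum.inr '' Pcross).ncard :=
              Set.ncard_le_ncard hHimg (Set.toFinite _)
          _ ≤ (Sum.inl '' Pinit).ncard + (Sum.inr '' Pcross).ncard := Set.ncard_union_le _ _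
          _ = Pinit.ncard + Pcross.ncard := by
              rw [Set.ncard_image_of_injective _ Sum.inl_injective,
                Set.ncard_image_of_injective _ Sum.inr_injective]
          _ ≤ fsum n (r''+1) + fsum n r'' := Nat.add_le_add hPinitcard hPcrosscard
          _ = fsum (n+1) (r''+1) := fsum_pascal n r''
      · -- no crossing: last sign constant
        apply key_const
        intro s₁ h₁ s₂ h₂
        obtain ⟨u₁, hu₁, hc₁⟩ := h₁
        obtain ⟨u₂, hu₂, hc₂⟩ := h₂
        by_contra hne
        rcases Bool.eq_false_or_eq_true (s₁ (Fin.last n)) with hb₁ | hb₁ <;>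
          rcases Bool.eq_false_or_eq_true (s₂ (Fin.last n)) with hb₂ | hb₂
        · exact hne (hb₁.trans hb₂.symm)
        · -- s₁ true, s₂ false
          apply hcross
          refine ⟨u₁, hu₁, u₂, hu₂, (hc₁ (Fin.last n)).2.mp hb₁, ?_⟩
          have := hc₂ (Fin.last n)
          rcases lt_or_gt_of_ne this.1 with h | h
          · exact h
          · exact absurd (this.2.mpr h) (by simp [hb₂])
        · -- s₁ false, s₂ true
          apply hcross
          refine ⟨u₂, hu₂, u₁, hu₁, (hc₂ (Fin.last n)).2.mp hb₂, ?_⟩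
          have := hc₁ (Fin.last n)
          rcases lt_or_gt_of_ne this.1 with h | h
          · exact h
          · exact absurd (this.2.mpr h) (by simp [hb₁])
        · exact hne (hb₁.trans hb₂.symm)

end PB


/-- Two descriptions of the same hyperplane are proportional. -/
lemma hyp_rep {d : ℕ} {a a' : Fin d → ℝ} {c c' : ℝ} (ha : a ≠ 0) (ha' : a' ≠ 0)
    (hset : {ξ : Fin d → ℝ | ∑ i, a i * ξ i = c} = {ξ : Fin d → ℝ | ∑ i, a' i * ξ i = c'}) :
    ∃ lam : ℝ, lam ≠ 0 ∧ (∀ i, a' i = lam * a i) ∧ c' = lam * c := by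
  classical
  set S := ∑ i, a i * a i with hSdef
  have hexa : ∃ i, a i ≠ 0 := by
    by_contra h; push_neg at h; exact ha (funext h)
  obtain ⟨i₀, hi₀⟩ := hexa
  have hS : 0 < S := Finset.sum_pos' (fun i _ => mul_self_nonneg _)
    ⟨i₀, Finset.mem_univ _, mul_self_pos.mpr hi₀⟩
  set ξ0 : Fin d → ℝ := fun i => (c / S) * a i with hξ0
  have hgξ0 : ∑ i, a i * ξ0 i = c := by
    simp only [hξ0]
    rw [show (∑ i, a i * (c / S * a i)) = (c / S) * ∑ i, a i * a i from by
      rw [Finset.mul_sum]; exact Finset.sum_congr rfl fun i _ => by ring]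
    field_simp
    simp only [hSdef, sq]
  have hmem0 : ∑ i, a' i * ξ0 i = c' := by
    have : ξ0 ∈ {ξ : Fin d → ℝ | ∑ i, a i * ξ i = c} := hgξ0
    rw [hset] at this; exact this
  have hker : ∀ v : Fin d → ℝ, (∑ i, a i * v i) = 0 → (∑ i, a' i * v i) = 0 := by
    intro v hv
    have h1 : ∑ i, a i * (ξ0 i + v i) = c := by
      rw [show (∑ i, a i * (ξ0 i + v i)) = (∑ i, a i * ξ0 i) + ∑ i, a i * v i from by
        rw [← Finset.sum_add_distrib]; exact Finset.sum_congr rfl fun i _ => by ring]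
      rw [hgξ0, hv]; ring
    have h2 : (fun i => ξ0 i + v i) ∈ {ξ : Fin d → ℝ | ∑ i, a' i * ξ i = c'} := by
      rw [← hset]; exact h1
    have h3 : ∑ i, a' i * (ξ0 i + v i) = c' := h2
    rw [show (∑ i, a' i * (ξ0 i + v i)) = (∑ i, a' i * ξ0 i) + ∑ i, a' i * v i from by
      rw [← Finset.sum_add_distrib]; exact Finset.sum_congr rfl fun i _ => by ring] at h3
    rw [hmem0] at h3; linarith
  set lam := (∑ i, a' i * a i) / S with hlam
  have hprop : ∀ j, a' j = lam * a j := by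
    intro j
    set v : Fin d → ℝ := fun i => (Pi.single j (1:ℝ) : Fin d → ℝ) i - (a j / S) * a i with hvdef
    have hav : ∑ i, a i * v i = 0 := by
      rw [show (∑ i, a i * v i)
          = (∑ i, a i * (Pi.single j (1:ℝ) : Fin d → ℝ) i) - (a j / S) * ∑ i, a i * a i from by
        rw [Finset.mul_sum, ← Finset.sum_sub_distrib]
        exact Finset.sum_congr rfl fun i _ => by simp [hvdef]; ring]
      rw [show (∑ i, a i * (Pi.single j (1:ℝ) : Fin d → ℝ) i) = a j from by
        rw [Finset.sum_eq_single j]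
        · simp
        · intro b _ hb; simp [Pi.single_eq_of_ne hb]
        · simp]
      field_simp
      simp only [hSdef, sq, sub_self, mul_zero]
    have := hker v hav
    rw [show (∑ i, a' i * v i)
        = (∑ i, a' i * (Pi.single j (1:ℝ) : Fin d → ℝ) i) - (a j / S) * ∑ i, a' i * a i from by
      rw [Finset.mul_sum, ← Finset.sum_sub_distrib]
      exact Finset.sum_congr rfl fun i _ => by simp [hvdef]; ring] at this
    rw [show (∑ i, a' i * (Pi.single j (1:ℝ) : Fin d → ℝ) i) = a' j from by
      rw [Finset.sum_eq_single j]
      · simp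
      · intro b _ hb; simp [Pi.single_eq_of_ne hb]
      · simp] at this
    rw [hlam]; field_simp at this ⊢; linarith
  have hc' : c' = lam * c := by
    rw [← hmem0]
    rw [show (∑ i, a' i * ξ0 i) = (c / S) * ∑ i, a' i * a i from by
      rw [Finset.mul_sum]; exact Finset.sum_congr rfl fun i _ => by simp [hξ0]; ring]
    rw [hlam]; field_simp
  have hlamne : lam ≠ 0 := by
    intro h0
    apply ha'
    funext j
    rw [hprop j, h0]; simp
  exact ⟨lam, hlamne, hprop, hc'⟩


end AuxLemmas

section RowAux
variable {nx ny nξ m : ℕ}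

lemma row_iff (hv : Fin m → ℤ) (H : Matrix (Fin m) (Fin nξ) ℤ)
    (A0 : Matrix (Fin m) (Fin nx) ℤ) (Ai : Fin nξ → Matrix (Fin m) (Fin nx) ℤ)
    (B0 : Matrix (Fin m) (Fin ny) ℤ)
    (x : Fin nx → ℝ) (y : Fin ny → ℝ) (ξ : Fin nξ → ℝ) (l : Fin m) :
    ((hv l : ℝ) + ∑ i, (H l i : ℝ) * ξ i ≤
      (∑ j, ((A0 l j : ℝ) + ∑ i, ξ i * (Ai i l j : ℝ)) * x j) +
      ∑ j, (B0 l j : ℝ) * y j)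
    ↔ rowRhs hv A0 B0 x y l ≤ ∑ i, rowCoef H Ai x l i * ξ i := by
  have key : ∑ i, rowCoef H Ai x l i * ξ i
      = (∑ j, (∑ i, ξ i * (Ai i l j : ℝ)) * x j) - ∑ i, (H l i : ℝ) * ξ i := by
    have e1 : ∑ i, rowCoef H Ai x l i * ξ i
        = ∑ i, ((∑ j, (Ai i l j : ℝ) * x j) * ξ i - (H l i : ℝ) * ξ i) :=
      Finset.sum_congr rfl fun i _ => by simp [rowCoef]; ring
    rw [e1, Finset.sum_sub_distrib]
    congr 1
    calc ∑ i, (∑ j, (Ai i l j : ℝ) * x j) * ξ i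
        = ∑ i, ∑ j, (Ai i l j : ℝ) * x j * ξ i := by
          exact Finset.sum_congr rfl fun i _ => Finset.sum_mul _ _ _
      _ = ∑ j, ∑ i, (Ai i l j : ℝ) * x j * ξ i := Finset.sum_comm
      _ = ∑ j, (∑ i, ξ i * (Ai i l j : ℝ)) * x j := by
          refine Finset.sum_congr rfl fun j _ => ?_
          rw [Finset.sum_mul]
          exact Finset.sum_congr rfl fun i _ => by ring
  have expand : ∑ j, ((A0 l j : ℝ) + ∑ i, ξ i * (Ai i l j : ℝ)) * x j
      = (∑ j, (A0 l j : ℝ) * x j) + ∑ j, (∑ i, ξ i * (Ai i l j : ℝ)) * x j := by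
    rw [← Finset.sum_add_distrib]
    exact Finset.sum_congr rfl fun j _ => by ring
  rw [expand]
  unfold rowRhs
  constructor <;> intro h <;> linarith [key]

/-- A convex set minus finitely many non-covering hyperplanes is nonempty. -/
lemma avoid_finite {d : ℕ} {U : Set (Fin d → ℝ)} (hUconv : Convex ℝ U) (hUne : U.Nonempty)
    {ι : Type*} (F : Finset ι) (a : ι → Fin d → ℝ) (c : ι → ℝ)
    (h : ∀ k ∈ F, ∃ v ∈ U, ∑ i, a k i * v i ≠ c k) :
    ∃ v ∈ U, ∀ k ∈ F, ∑ i, a k i * v i ≠ c k := by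
  classical
  induction F using Finset.induction_on with
  | empty => obtain ⟨v, hv⟩ := hUne; exact ⟨v, hv, by simp⟩
  | @insert k0 F hk0 IH =>
      obtain ⟨v, hvU, hv⟩ := IH (fun k hk => h k (Finset.mem_insert_of_mem hk))
      obtain ⟨v0, hv0U, hv0⟩ := h k0 (Finset.mem_insert_self _ _)
      by_cases hcase : ∑ i, a k0 i * v i ≠ c k0
      · exact ⟨v, hvU, fun k hk => by
          rcases Finset.mem_insert.mp hk with rfl | hk
          · exact hcase
          · exact hv k hk⟩
      · push_neg at hcase
        -- blend v towards v0
        set Bad : Set ℝ := ⋃ k ∈ (F : Set ι), {t : ℝ | (∑ i, a k i * v i)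
          + t * ((∑ i, a k i * v0 i) - (∑ i, a k i * v i)) = c k} with hBad
        have hBadfin : Bad.Finite := by
          refine Set.Finite.biUnion F.finite_toSet (fun k hk => ?_)
          refine Set.Subsingleton.finite (fun t1 h1 t2 h2 => ?_)
          simp only [Set.mem_setOf_eq] at h1 h2
          by_contra hne
          have hprod : (t1 - t2) * ((∑ i, a k i * v0 i) - (∑ i, a k i * v i)) = 0 := by
            linear_combination h1 - h2
          rcases mul_eq_zero.mp hprod with hz | hz
          · exact hne (by linarith)
          · rw [hz, mul_zero, add_zero] at h1
            exact hv k hk h1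
        have hIoc : (Set.Ioc (0:ℝ) 1).Infinite := Set.Ioc_infinite (by norm_num : (0:ℝ) < 1)
        obtain ⟨t, ht⟩ := (hIoc.diff hBadfin).nonempty
        obtain ⟨⟨ht0, ht1⟩, htB⟩ := ht
        have hmemU : (fun i => v i + t * (v0 i - v i)) ∈ U := by
          have hmem : (1-t) • v + t • v0 ∈ U :=
            hUconv hvU hv0U (by linarith : (0:ℝ) ≤ 1 - t) ht0.le (by ring)
          have heq : (fun i => v i + t * (v0 i - v i)) = (1-t) • v + t • v0 := by
            funext i; simp [Pi.smul_apply]; ring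
          rw [heq]; exact hmem
        refine ⟨fun i => v i + t * (v0 i - v i), hmemU, ?_⟩
        intro k hk
        have hlin : (∑ i, a k i * (v i + t * (v0 i - v i)))
            = (∑ i, a k i * v i) + t * ((∑ i, a k i * v0 i) - (∑ i, a k i * v i)) := by
          rw [mul_sub, Finset.mul_sum, Finset.mul_sum, ← Finset.sum_sub_distrib,
            ← Finset.sum_add_distrib]
          exact Finset.sum_congr rfl fun i _ => by ring
        rcases Finset.mem_insert.mp hk with rfl | hk
        · rw [hlin, hcase]
          intro habs
          have : t * ((∑ i, a k i * v0 i) - c k) = 0 := by linarith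
          rcases mul_eq_zero.mp this with h | h
          · linarith
          · apply hv0; linarith
        · rw [hlin]
          intro habs
          apply htB
          rw [hBad]
          simp only [Set.mem_iUnion, Set.mem_setOf_eq]
          exact ⟨k, hk, habs⟩
  

lemma dense_avoid {d : ℕ} {U : Set (Fin d → ℝ)} (hUconv : Convex ℝ U) (hUne : U.Nonempty)
    {ι : Type*} (F : Finset ι) (a : ι → Fin d → ℝ) (c : ι → ℝ)
    (h : ∀ k ∈ F, ∃ v ∈ U, ∑ i, a k i * v i ≠ c k) :
    U ⊆ closure (U \ ⋃ k ∈ (F : Set ι), {ξ : Fin d → ℝ | ∑ i, a k i * ξ i = c k}) := by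
  classical
  obtain ⟨v, hvU, hv⟩ := avoid_finite hUconv hUne F a c h
  intro u hu
  rw [Metric.mem_closure_iff]
  intro ε hε
  -- the bad parameter set
  set Bad : Set ℝ := ⋃ k ∈ (F : Set ι), {t : ℝ | (∑ i, a k i * u i)
    + t * ((∑ i, a k i * v i) - (∑ i, a k i * u i)) = c k} with hBad
  have hBadfin : Bad.Finite := by
    refine Set.Finite.biUnion F.finite_toSet (fun k hk => ?_)
    refine Set.Subsingleton.finite (fun t1 h1 t2 h2 => ?_)
    simp only [Set.mem_setOf_eq] at h1 h2
    by_contra hne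
    have hprod : (t1 - t2) * ((∑ i, a k i * v i) - (∑ i, a k i * u i)) = 0 := by
      linear_combination h1 - h2
    rcases mul_eq_zero.mp hprod with hz | hz
    · exact hne (by linarith)
    · rw [hz, mul_zero, add_zero] at h1
      apply hv k hk
      have : (∑ i, a k i * v i) = (∑ i, a k i * u i) := by linarith
      rw [this, h1]
  set δ : ℝ := min 1 (ε / (‖v - u‖ + 1)) with hδ
  have hnorm1 : (0:ℝ) < ‖v - u‖ + 1 := by positivity
  have hδ0 : 0 < δ := lt_min (by norm_num) (div_pos hε hnorm1)
  have hIoc : (Set.Ioc (0:ℝ) δ).Infinite := Set.Ioc_infinite hδ0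
  obtain ⟨t, ⟨⟨ht0, htδ⟩, htB⟩⟩ := (hIoc.diff hBadfin).nonempty
  have ht1 : t ≤ 1 := le_trans htδ (min_le_left _ _)
  set w : Fin d → ℝ := fun i => u i + t * (v i - u i) with hw
  have hwU : w ∈ U := by
    have hmem : (1-t) • u + t • v ∈ U :=
      hUconv hu hvU (by linarith : (0:ℝ) ≤ 1 - t) ht0.le (by ring)
    have heq : w = (1-t) • u + t • v := by
      funext i; simp [hw, Pi.smul_apply]; ring
    rw [heq]; exact hmem
  refine ⟨w, ⟨hwU, ?_⟩, ?_⟩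
  · -- off all the hyperplanes
    intro hmem
    simp only [Set.mem_iUnion, Set.mem_setOf_eq] at hmem
    obtain ⟨k, hk, hkeq⟩ := hmem
    apply htB
    rw [hBad]
    simp only [Set.mem_iUnion, Set.mem_setOf_eq]
    refine ⟨k, hk, ?_⟩
    rw [← hkeq]
    rw [mul_sub, Finset.mul_sum, Finset.mul_sum, ← Finset.sum_sub_distrib,
      ← Finset.sum_add_distrib]
    exact Finset.sum_congr rfl fun i _ => by simp only [hw]; ring
  · -- close to u
    have heq : u - w = (-t) • (v - u) := by
      funext i
      simp only [hw, Pi.sub_apply, Pi.smul_apply, smul_eq_mul, Pi.neg_apply]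
      ring
    rw [dist_eq_norm, heq, norm_smul]
    simp only [norm_neg, Real.norm_eq_abs, abs_of_pos ht0]
    calc t * ‖v - u‖ ≤ δ * ‖v - u‖ := by
          apply mul_le_mul_of_nonneg_right htδ (norm_nonneg _)
      _ ≤ (ε / (‖v - u‖ + 1)) * ‖v - u‖ := by
          apply mul_le_mul_of_nonneg_right (min_le_right _ _) (norm_nonneg _)
      _ < ε := by
          rw [div_mul_eq_mul_div, div_lt_iff₀ hnorm1]
          nlinarith [norm_nonneg (v - u)]

end RowAux

set_option maxHeartbeats 1600000

/-- Under fixed recourse, for every `x ∈ X` feasible for the two-stage robust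
problem there are at most `R ≤ Σ_{i=0}^{min{m,n_ξ}} C(η, i)` convex recourse-stable regions
whose closures cover `U`, where `η ≥ 1` bounds `|H(x')|` over all feasible `x'`. -/
theorem stmt_10 (nx ny nξ m : ℕ) (hnx : 0 < nx) (hny : 0 < ny) (hnξ : 0 < nξ) (hm0 : 0 < m)
    (X : Set (Fin nx → ℝ)) (hXcomp : IsCompact X) (hXne : X.Nonempty)
    (Y : Set (Fin ny → ℝ)) (hYfin : Y.Finite) (hYne : Y.Nonempty)
    (hYint : ∀ y ∈ Y, ∀ i, ∃ z : ℤ, y i = (z : ℝ))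
    (Yx : (Fin nx → ℝ) → Set (Fin ny → ℝ))
    (hYxsub : ∀ x ∈ X, Yx x ⊆ Y) (hYxne : ∀ x ∈ X, (Yx x).Nonempty)
    (U : Set (Fin nξ → ℝ)) (hUcomp : IsCompact U) (hUconv : Convex ℝ U) (hUne : U.Nonempty)
    (hv : Fin m → ℤ) (H : Matrix (Fin m) (Fin nξ) ℤ)
    (A0 : Matrix (Fin m) (Fin nx) ℤ) (Ai : Fin nξ → Matrix (Fin m) (Fin nx) ℤ)
    (B0 : Matrix (Fin m) (Fin ny) ℤ)
    (η : ℕ) (hη1 : 1 ≤ η)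
    (hηb : ∀ x ∈ X, Feasible2RO hv H A0 Ai B0 Yx U x →
      (HypSet hv H A0 Ai B0 Yx U x).ncard ≤ η) :
    ∀ x ∈ X, Feasible2RO hv H A0 Ai B0 Yx U x →
      ∃ (R : ℕ) (D : Fin R → Set (Fin nξ → ℝ)),
        (∀ t, D t ⊆ U ∧ Convex ℝ (D t) ∧
          RecourseStableS hv H A0 Ai B0 Yx x (D t)) ∧
        (⋃ t, closure (D t)) = U ∧
        R ≤ ∑ i ∈ Finset.range (min m nξ + 1), Nat.choose η i := by
  intro x hxX hxFeas
  classical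
  -- `HypSet` is finite
  have hHfin : (HypSet hv H A0 Ai B0 Yx U x).Finite := by
    have himg : HypSet hv H A0 Ai B0 Yx U x ⊆
        (fun q : (Fin ny → ℝ) × Fin m =>
          {ξ : Fin nξ → ℝ | ∑ i, rowCoef H Ai x q.2 i * ξ i = rowRhs hv A0 B0 x q.1 q.2}) ''
          ((Yx x) ×ˢ (Set.univ : Set (Fin m))) := by
      rintro P ⟨y, hy, l, hne, hPeq, hPne⟩
      exact ⟨(y, l), ⟨hy, trivial⟩, hPeq.symm⟩
    exact Set.Finite.subset (Set.Finite.image _ (Set.Finite.prod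
      ((hYfin.subset (hYxsub x hxX))) (Set.finite_univ))) himg
  -- the hyperplanes that genuinely cut `U`
  set K := {P | P ∈ HypSet hv H A0 Ai B0 Yx U x ∧ ¬ U ⊆ P} with hK
  have hKsub : K ⊆ HypSet hv H A0 Ai B0 Yx U x := fun P hP => hP.1
  have hKfin : K.Finite := hHfin.subset hKsub
  set KF : Finset (Set (Fin nξ → ℝ)) := hKfin.toFinset with hKF
  set n := KF.card with hn
  have hnη : n ≤ η := by
    have h1 : K.ncard ≤ (HypSet hv H A0 Ai B0 Yx U x).ncard :=
      Set.ncard_le_ncard hKsub hHfin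
    have h2 := hηb x hxX hxFeas
    have h3 : K.ncard = KF.card := Set.ncard_eq_toFinset_card K hKfin
    omega
  set eK : Fin n ≃ {P // P ∈ KF} := KF.equivFin.symm with heK
  -- choose a linear description of each hyperplane
  have hrep : ∀ k : Fin n, ∃ (l : Fin m) (y : Fin ny → ℝ), y ∈ Yx x ∧
      rowCoef H Ai x l ≠ 0 ∧
      ((eK k : Set (Fin nξ → ℝ)) =
        {ξ | ∑ i, rowCoef H Ai x l i * ξ i = rowRhs hv A0 B0 x y l}) := by
    intro k
    have hmem : (eK k : Set (Fin nξ → ℝ)) ∈ K := hKfin.mem_toFinset.mp (eK k).2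
    obtain ⟨⟨y, hy, l, hne, hPeq, hPne⟩, hnot⟩ := hmem
    exact ⟨l, y, hy, hne, hPeq⟩
  choose lsel ysel hysel hnz hPeqs using hrep
  set aa : Fin n → Fin nξ → ℝ := fun k => rowCoef H Ai x (lsel k) with haa
  set cc : Fin n → ℝ := fun k => rowRhs hv A0 B0 x (ysel k) (lsel k) with hcc
  set φ : Fin n → (Fin nξ → ℝ) →ₗ[ℝ] ℝ := fun k => linMap (aa k) with hφ
  -- not all of U lies on any of these hyperplanes
  have hcut : ∀ k : Fin n, ∃ v ∈ U, ∑ i, aa k i * v i ≠ cc k := by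
    intro k
    have hmem : (eK k : Set (Fin nξ → ℝ)) ∈ K := hKfin.mem_toFinset.mp (eK k).2
    have hnot := hmem.2
    rw [hPeqs k] at hnot
    obtain ⟨v, hvU, hvnot⟩ := Set.not_subset.mp hnot
    exact ⟨v, hvU, hvnot⟩
  -- the realized sign patterns over U
  set PatU : Set (Fin n → Bool) :=
    {s | ∃ ξ ∈ U, ∀ k, φ k ξ ≠ cc k ∧ (s k = true ↔ cc k < φ k ξ)} with hPatU
  have hPatUfin : PatU.Finite := Set.toFinite _
  set R := hPatUfin.toFinset.card with hR
  have hRcard : PatU.ncard = R := Set.ncard_eq_toFinset_card PatU hPatUfin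
  set eP : Fin R ≃ {s // s ∈ hPatUfin.toFinset} := hPatUfin.toFinset.equivFin.symm with heP
  -- the open cells of the arrangement
  set cell : (Fin n → Bool) → Set (Fin nξ → ℝ) := fun s =>
    {ξ | ∀ k, if s k = true then cc k < φ k ξ else φ k ξ < cc k} with hcell
  set D : Fin R → Set (Fin nξ → ℝ) := fun t => cell (eP t : Fin n → Bool) ∩ U with hD
  have hDsubU : ∀ t, D t ⊆ U := fun t => Set.inter_subset_right
  -- convexity of each region
  have hcellconv : ∀ s, Convex ℝ (cell s) := by
    intro s
    have hrw : cell s =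
        ⋂ k, {ξ : Fin nξ → ℝ | if s k = true then cc k < φ k ξ else φ k ξ < cc k} := by
      ext ξ; simp [hcell, Set.mem_iInter]
    rw [hrw]
    refine convex_iInter fun k => ?_
    by_cases hb : s k = true
    · simp only [hb, if_true]
      exact convex_halfSpace_gt (LinearMap.isLinear (φ k)) (cc k)
    · simp only [hb, if_false]
      exact convex_halfSpace_lt (LinearMap.isLinear (φ k)) (cc k)
  -- row dichotomy on each region
  have hrowdich : ∀ t, ∀ y ∈ Yx x, ∀ l : Fin m,
      (∀ ξ ∈ D t, rowRhs hv A0 B0 x y l ≤ ∑ i, rowCoef H Ai x l i * ξ i) ∨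
      (∀ ξ ∈ D t, ¬ (rowRhs hv A0 B0 x y l ≤ ∑ i, rowCoef H Ai x l i * ξ i)) := by
    intro t y hy l
    by_cases hA : rowCoef H Ai x l = 0
    · by_cases hc0 : rowRhs hv A0 B0 x y l ≤ 0
      · left; intro ξ _
        have : ∑ i, rowCoef H Ai x l i * ξ i = 0 := by simp [hA]
        rw [this]; exact hc0
      · right; intro ξ _
        have : ∑ i, rowCoef H Ai x l i * ξ i = 0 := by simp [hA]
        rw [this]; exact hc0
    · set P : Set (Fin nξ → ℝ) :=
        {ξ | ∑ i, rowCoef H Ai x l i * ξ i = rowRhs hv A0 B0 x y l} with hP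
      by_cases hPU : (P ∩ U).Nonempty
      · have hPHyp : P ∈ HypSet hv H A0 Ai B0 Yx U x := ⟨y, hy, l, hA, rfl, hPU⟩
        by_cases hUP : U ⊆ P
        · left
          intro ξ hξ
          have : ξ ∈ P := hUP (hDsubU t hξ)
          exact le_of_eq this.symm
        · have hPK : P ∈ K := ⟨hPHyp, hUP⟩
          have hPKF : P ∈ KF := hKfin.mem_toFinset.mpr hPK
          set k0 : Fin n := eK.symm ⟨P, hPKF⟩ with hk0
          have hPk0 : (eK k0 : Set (Fin nξ → ℝ)) = P := by
            rw [hk0, Equiv.apply_symm_apply]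
          have hPP : {ξ : Fin nξ → ℝ | ∑ i, aa k0 i * ξ i = cc k0} =
              {ξ : Fin nξ → ℝ | ∑ i, rowCoef H Ai x l i * ξ i = rowRhs hv A0 B0 x y l} := by
            rw [← hPeqs k0, hPk0]
          obtain ⟨lam, hlam0, hprop, hceq⟩ := hyp_rep (hnz k0) hA hPP
          have hkey : ∀ ξ : Fin nξ → ℝ,
              (∑ i, rowCoef H Ai x l i * ξ i) - rowRhs hv A0 B0 x y l
                = lam * ((∑ i, aa k0 i * ξ i) - cc k0) := by
            intro ξ
            rw [mul_sub, Finset.mul_sum, hceq]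
            congr 1
            exact Finset.sum_congr rfl fun i _ => by rw [hprop i]; ring
          -- the sign of the hyperplane k0 on the cell
          rcases Bool.eq_false_or_eq_true ((eP t : Fin n → Bool) k0) with hb | hb
          · -- on the cell, cc k0 < φ k0
            have hside : ∀ ξ ∈ D t, cc k0 < (∑ i, aa k0 i * ξ i) := by
              intro ξ hξ
              have := hξ.1 k0
              rw [hb] at this
              simpa [hφ] using this
            rcases lt_or_gt_of_ne hlam0 with hlam | hlam
            · right; intro ξ hξ
              have hm : lam * ((∑ i, aa k0 i * ξ i) - cc k0) < 0 :=
                mul_neg_of_neg_of_pos hlam (by linarith [hside ξ hξ])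
              have := hkey ξ
              intro hcon
              linarith
            · left; intro ξ hξ
              have hm : 0 < lam * ((∑ i, aa k0 i * ξ i) - cc k0) :=
                mul_pos hlam (by linarith [hside ξ hξ])
              have := hkey ξ
              linarith
          · -- on the cell, φ k0 < cc k0
            have hside : ∀ ξ ∈ D t, (∑ i, aa k0 i * ξ i) < cc k0 := by
              intro ξ hξ
              have := hξ.1 k0
              rw [hb] at this
              simpa [hφ] using this
            rcases lt_or_gt_of_ne hlam0 with hlam | hlam
            · left; intro ξ hξ
              have hm : 0 < lam * ((∑ i, aa k0 i * ξ i) - cc k0) :=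
                mul_pos_of_neg_of_neg hlam (by linarith [hside ξ hξ])
              have := hkey ξ
              linarith
            · right; intro ξ hξ
              have hm : lam * ((∑ i, aa k0 i * ξ i) - cc k0) < 0 :=
                mul_neg_of_pos_of_neg hlam (by linarith [hside ξ hξ])
              have := hkey ξ
              intro hcon
              linarith
      · -- the hyperplane misses U : the sign is constant on U
        have hne : ∀ ξ ∈ U, (∑ i, rowCoef H Ai x l i * ξ i) ≠ rowRhs hv A0 B0 x y l := by
          intro ξ hξ habs
          exact hPU ⟨ξ, habs, hξ⟩
        by_cases hex : ∃ ξ ∈ U, rowRhs hv A0 B0 x y l < ∑ i, rowCoef H Ai x l i * ξ i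
        · left
          obtain ⟨ξ₁, hξ₁U, hξ₁⟩ := hex
          intro ξ hξ
          by_contra hcon
          push_neg at hcon
          have hlt : (∑ i, rowCoef H Ai x l i * ξ i) < rowRhs hv A0 B0 x y l :=
            lt_of_le_of_ne hcon.le (hne ξ (hDsubU t hξ))
          obtain ⟨t', ht'0, ht'1, ht'eq⟩ := cross_point (linMap (rowCoef H Ai x l))
            (rowRhs hv A0 B0 x y l) (ξ₁ := ξ₁) (ξ₂ := ξ) hξ₁ hlt
          have hmemU : ξ + t' • (ξ₁ - ξ) ∈ U := by
            have hmem : (1-t') • ξ + t' • ξ₁ ∈ U :=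
              hUconv (hDsubU t hξ) hξ₁U (by linarith) ht'0.le (by ring)
            rw [comb_eq]; exact hmem
          exact hne _ hmemU ht'eq
        · right
          push_neg at hex
          intro ξ hξ hcon
          exact hne ξ (hDsubU t hξ)
            (le_antisymm (hex ξ (hDsubU t hξ)) hcon)
  -- recourse stability
  have hstable : ∀ t, RecourseStableS hv H A0 Ai B0 Yx x (D t) := by
    intro t y hy
    by_cases hall : ∀ l : Fin m, ∀ ξ ∈ D t,
        rowRhs hv A0 B0 x y l ≤ ∑ i, rowCoef H Ai x l i * ξ i
    · left
      intro ξ hξ l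
      rw [row_iff]
      exact hall l ξ hξ
    · right
      push_neg at hall
      obtain ⟨l, ξ₀, hξ₀, hbad⟩ := hall
      have hdneg : ∀ ξ ∈ D t, ¬ (rowRhs hv A0 B0 x y l ≤ ∑ i, rowCoef H Ai x l i * ξ i) := by
        rcases hrowdich t y hy l with hpos | hneg
        · exact absurd (hpos ξ₀ hξ₀) (not_le.mpr hbad)
        · exact hneg
      intro ξ hξ hFeas
      exact hdneg ξ hξ ((row_iff hv H A0 Ai B0 x y ξ l).mp (hFeas l))
  -- the closures cover U
  have hUclosed : IsClosed U := hUcomp.isClosed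
  have hcover : (⋃ t, closure (D t)) = U := by
    apply le_antisymm
    · intro ξ hξ
      obtain ⟨t, ht⟩ := Set.mem_iUnion.mp hξ
      exact hUclosed.closure_subset_iff.mpr (hDsubU t) ht
    · -- density argument
      have hdense := dense_avoid hUconv hUne (Finset.univ : Finset (Fin n)) aa cc
        (fun k _ => hcut k)
      have hsub2 : U \ ⋃ k ∈ ((Finset.univ : Finset (Fin n)) : Set (Fin n)),
          {ξ : Fin nξ → ℝ | ∑ i, aa k i * ξ i = cc k} ⊆ ⋃ t, D t := by
        rintro ξ ⟨hξU, hξoff⟩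
        have hoff : ∀ k : Fin n, (∑ i, aa k i * ξ i) ≠ cc k := by
          intro k habs
          apply hξoff
          simp only [Set.mem_iUnion, Set.mem_setOf_eq]
          exact ⟨k, by simp, habs⟩
        set s : Fin n → Bool := fun k => decide (cc k < φ k ξ) with hs
        have hsPat : s ∈ PatU := by
          refine ⟨ξ, hξU, fun k => ⟨hoff k, ?_⟩⟩
          simp [hs]
        refine Set.mem_iUnion.mpr ⟨eP.symm ⟨s, hPatUfin.mem_toFinset.mpr hsPat⟩, ?_, hξU⟩
        have heq : (eP (eP.symm ⟨s, hPatUfin.mem_toFinset.mpr hsPat⟩) : Fin n → Bool) = s := by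
          rw [Equiv.apply_symm_apply]
        show ξ ∈ cell _
        rw [heq]
        intro k
        by_cases hb : s k = true
        · rw [if_pos hb]
          have := of_decide_eq_true (hs ▸ hb)
          exact this
        · rw [if_neg hb]
          have : ¬ (cc k < φ k ξ) := by
            intro habs
            exact hb (by simp [hs, habs])
          exact lt_of_le_of_ne (not_lt.mp this) (hoff k)
      calc U ⊆ closure (U \ ⋃ k ∈ ((Finset.univ : Finset (Fin n)) : Set (Fin n)),
            {ξ : Fin nξ → ℝ | ∑ i, aa k i * ξ i = cc k}) := hdense
        _ ⊆ closure (⋃ t, D t) := closure_mono hsub2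
        _ ⊆ ⋃ t, closure (D t) := by
            apply closure_minimal (Set.iUnion_mono fun t => subset_closure)
            exact isClosed_iUnion_of_finite fun t => isClosed_closure
  -- the cardinality bound
  have hrank : finrank ℝ (span ℝ (Set.range fun k =>
      (φ k).domRestrict (⊤ : Submodule ℝ (Fin nξ → ℝ)))) ≤ min m nξ := by
    set ρ : ((Fin nξ → ℝ) →ₗ[ℝ] ℝ) →ₗ[ℝ] ((⊤ : Submodule ℝ (Fin nξ → ℝ)) →ₗ[ℝ] ℝ) :=
      LinearMap.lcomp ℝ ℝ (⊤ : Submodule ℝ (Fin nξ → ℝ)).subtype with hρ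
    have hrw : (Set.range fun k => (φ k).domRestrict (⊤ : Submodule ℝ (Fin nξ → ℝ)))
        = ρ '' (Set.range φ) := by
      rw [← Set.range_comp]; rfl
    rw [hrw, ← Submodule.map_span]
    set S0 := span ℝ (Set.range φ) with hS0
    haveI : FiniteDimensional ℝ S0 := FiniteDimensional.span_of_finite ℝ (Set.finite_range _)
    have h1 : finrank ℝ (Submodule.map ρ S0) ≤ finrank ℝ S0 := Submodule.finrank_map_le ρ S0
    -- bound via the m row functionals
    have hle : S0 ≤ span ℝ (Set.range fun l : Fin m => linMap (rowCoef H Ai x l)) := by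
      rw [hS0, span_le]
      rintro _ ⟨k, rfl⟩
      exact subset_span ⟨lsel k, rfl⟩
    haveI : FiniteDimensional ℝ (span ℝ (Set.range fun l : Fin m => linMap (rowCoef H Ai x l))) :=
      FiniteDimensional.span_of_finite ℝ (Set.finite_range _)
    have h2 : finrank ℝ S0 ≤
        finrank ℝ (span ℝ (Set.range fun l : Fin m => linMap (rowCoef H Ai x l))) :=
      Submodule.finrank_mono hle
    have h3 : finrank ℝ (span ℝ (Set.range fun l : Fin m => linMap (rowCoef H Ai x l))) ≤ m := by
      refine le_trans (finrank_span_le_card _) ?_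
      rw [Set.toFinset_range]
      exact le_trans (Finset.card_image_le) (by simp)
    have h4 : finrank ℝ S0 ≤ nξ := by
      have := S0.finrank_le
      rw [Module.finrank_linearMap, Module.finrank_self, mul_one, Module.finrank_pi] at this
      simpa using this
    exact le_min (by omega) (by omega)
  have hcount := pattern_bound n (min m nξ) (⊤ : Submodule ℝ (Fin nξ → ℝ)) 0 φ cc hrank
  have hPatsub : PatU ⊆ patSet (⊤ : Submodule ℝ (Fin nξ → ℝ)) 0 φ cc := by
    rintro s ⟨ξ, hξU, hξ⟩
    exact ⟨ξ, trivial, fun k => by simpa using hξ k⟩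
  have hRbound : R ≤ ∑ i ∈ Finset.range (min m nξ + 1), Nat.choose η i := by
    have h1 : PatU.ncard ≤ (patSet (⊤ : Submodule ℝ (Fin nξ → ℝ)) 0 φ cc).ncard :=
      Set.ncard_le_ncard hPatsub (Set.toFinite _)
    have h2 : fsum n (min m nξ) ≤ fsum η (min m nξ) := fsum_mono_n hnη _
    have h3 : fsum η (min m nξ) = ∑ i ∈ Finset.range (min m nξ + 1), Nat.choose η i := rfl
    omega
  exact ⟨R, D, fun t => ⟨hDsubU t, Convex.inter (hcellconv _) hUconv, hstable t⟩,
    hcover, hRbound⟩
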